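/- arXiv:1912.11441 — 3 statements merged into one kernel-verified Lean document; each statement's English description precedes it below -/
import Mathlib

section
/- Let p be an odd prime, n ≥ 1, and A, B, C ∈ F_{p^n} with A ≠ 0. Let N be the number of affine points (x,y) ∈ F_{p^n}² satisfying y² = Ax³ + Bx + C. Then, working in F_{p^n}, N - p^n ≡ -∑_{l=⌈(p^n-1)/6⌉}^{⌊(p^n-1)/4⌋} C((p^n-1)/2, 2l) · C(2l, (p^n-1-2l)/2) · A^((p^n-1-2l)/2) · B^(3l-(p^n-1)/2) · C^((p^n-1)/2-2l) (mod p), where C(n,k) denotes the binomial coefficient. -/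
open Finset Nat

private lemma aux_fiber (F : Type*) [Field F] [Fintype F] [DecidableEq F] (f : F → F) :
    (Finset.univ.filter (fun xy : F × F => xy.2 ^ 2 = f xy.1)).card
      = ∑ x : F, (Finset.univ.filter fun y : F => y ^ 2 = f x).card := by
  calc (Finset.univ.filter (fun xy : F × F => xy.2 ^ 2 = f xy.1)).card
      = Fintype.card {xy : F × F // xy.2 ^ 2 = f xy.1} := (Fintype.card_subtype _).symm
    _ = Fintype.card (Σ x : F, {y : F // y ^ 2 = f x}) :=
        Fintype.card_congr (Equiv.subtypeProdEquivSigmaSubtype fun a b => b ^ 2 = f a)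
    _ = ∑ x : F, Fintype.card {y : F // y ^ 2 = f x} := Fintype.card_sigma
    _ = _ := by simp [Fintype.card_subtype]

private lemma aux_sqcount (F : Type*) [Field F] [Fintype F] [DecidableEq F]
    (hF : ringChar F ≠ 2) (c : F) :
    ((Finset.univ.filter fun y : F => y ^ 2 = c).card : F) = 1 + c ^ (Fintype.card F / 2) := by
  have h := quadraticChar_card_sqrts hF c
  have hset : {x : F | x ^ 2 = c}.toFinset = Finset.univ.filter fun y : F => y ^ 2 = c := by
    ext y; simp
  rw [hset] at h
  have : (((Finset.univ.filter fun y : F => y ^ 2 = c).card : ℤ) : F)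
      = ((quadraticChar F c + 1 : ℤ) : F) := by rw [h]
  push_cast at this
  rw [this, quadraticChar_eq_pow_of_char_ne_two' hF, add_comm]

private lemma aux_powsum (F : Type*) [Field F] [Fintype F] [DecidableEq F] (m e : ℕ)
    (hm : 1 ≤ m) (hq : Fintype.card F = 2 * m + 1) (he : e ≤ 3 * m) :
    (∑ x : F, x ^ e) = if e = 2 * m then (-1 : F) else 0 := by
  have hq1 : Fintype.card F - 1 = 2 * m := by omega
  rcases lt_trichotomy e (2 * m) with h | h | h
  · rw [if_neg (by omega)]
    exact FiniteField.sum_pow_lt_card_sub_one F e (by omega)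
  · subst h
    rw [if_pos rfl]
    have key : ∀ x : F, x ^ (2 * m) = if x = 0 then 0 else 1 := by
      intro x
      split_ifs with hx
      · subst hx; exact zero_pow (by omega)
      · rw [← hq1]; exact FiniteField.pow_card_sub_one_eq_one x hx
    simp_rw [key]
    rw [Finset.sum_ite, Finset.sum_const, Finset.sum_const, smul_zero, zero_add,
      nsmul_eq_mul, mul_one, Finset.filter_ne', Finset.card_erase_of_mem (Finset.mem_univ 0),
      Finset.card_univ, Nat.cast_sub Fintype.card_pos, FiniteField.cast_card_eq_zero,
      Nat.cast_one, zero_sub]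
  · rw [if_neg (by omega)]
    have key : ∀ x : F, x ^ e = x ^ (e - 2 * m) := by
      intro x
      by_cases hx : x = 0
      · subst hx; rw [zero_pow (by omega), zero_pow (by omega)]
      · have hsplit : x ^ e = x ^ (2 * m + (e - 2 * m)) := by congr 1; omega
        rw [hsplit, pow_add, ← hq1, FiniteField.pow_card_sub_one_eq_one x hx, one_mul]
    simp_rw [key]
    exact FiniteField.sum_pow_lt_card_sub_one F _ (by omega)

private lemma aux_expand (F : Type*) [Field F] (A B C x : F) (m : ℕ) :
    (A * x ^ 3 + B * x + C) ^ m
      = ∑ k ∈ range (m + 1), ∑ j ∈ range (k + 1),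
          (choose m k : F) * (choose k j : F) * A ^ j * B ^ (k - j) * C ^ (m - k)
            * x ^ (k + 2 * j) := by
  rw [add_pow]
  refine Finset.sum_congr rfl fun k hk => ?_
  rw [add_pow, Finset.sum_mul, Finset.sum_mul]
  refine Finset.sum_congr rfl fun j hj => ?_
  have hjk : j ≤ k := by simpa [Nat.lt_succ_iff] using hj
  have hx : (x ^ 3) ^ j * x ^ (k - j) = x ^ (k + 2 * j) := by
    rw [← pow_mul, ← pow_add]
    congr 1
    omega
  rw [mul_pow, mul_pow]
  calc A ^ j * (x ^ 3) ^ j * (B ^ (k - j) * x ^ (k - j)) * (choose k j : F)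
        * C ^ (m - k) * (choose m k : F)
      = (choose m k : F) * (choose k j : F) * A ^ j * B ^ (k - j) * C ^ (m - k)
          * ((x ^ 3) ^ j * x ^ (k - j)) := by ring
    _ = _ := by rw [hx]

private lemma aux_reindex (M : Type*) [AddCommMonoid M] (m a b : ℕ) (g : ℕ → ℕ → M)
    (hab : ∀ l, (a ≤ l ∧ l ≤ b) ↔ (m ≤ 3 * l ∧ 2 * l ≤ m)) :
    ∑ k ∈ range (m + 1), ∑ j ∈ range (k + 1),
        (if k + 2 * j = 2 * m then g k j else 0)
      = ∑ l ∈ Icc a b, g (2 * l) (m - l) := by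
  rw [Finset.sum_sigma', ← Finset.sum_filter]
  refine Finset.sum_nbij' (fun p => m - p.2) (fun l => ⟨2 * l, m - l⟩) ?_ ?_ ?_ ?_ ?_
  · rintro ⟨k, j⟩ hp
    simp only [Finset.mem_filter, Finset.mem_sigma, Finset.mem_range, Nat.lt_succ_iff] at hp
    simp only [Finset.mem_Icc, hab]
    omega
  · intro l hl
    simp only [Finset.mem_Icc, hab] at hl
    simp only [Finset.mem_filter, Finset.mem_sigma, Finset.mem_range, Nat.lt_succ_iff]
    omega
  · rintro ⟨k, j⟩ hp
    simp only [Finset.mem_filter, Finset.mem_sigma, Finset.mem_range, Nat.lt_succ_iff] at hp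
    have h1 : 2 * (m - j) = k := by omega
    have h2 : m - (m - j) = j := by omega
    simp [h1, h2]
  · intro l hl
    simp only [Finset.mem_Icc, hab] at hl
    show m - (m - l) = l
    omega
  · rintro ⟨k, j⟩ hp
    simp only [Finset.mem_filter, Finset.mem_sigma, Finset.mem_range, Nat.lt_succ_iff] at hp
    have h1 : 2 * (m - j) = k := by omega
    have h2 : m - (m - j) = j := by omega
    simp [h1, h2]

theorem stmt_5 (p n : ℕ) (hp : p.Prime) (hodd : Odd p) (hn : 0 < n)
    (F : Type*) [Field F] [Fintype F] [DecidableEq F]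
    (hcard : Fintype.card F = p ^ n)
    (A B C : F) (hA : A ≠ 0) :
    (((Finset.univ.filter
        (fun xy : F × F => xy.2 ^ 2 = A * xy.1 ^ 3 + B * xy.1 + C)).card : F)
      - ((p ^ n : ℕ) : F)) =
      - ∑ l ∈ Finset.Icc ((p ^ n - 1 + 5) / 6) ((p ^ n - 1) / 4),
          ((Nat.choose ((p ^ n - 1) / 2) (2 * l) : F) *
            (Nat.choose (2 * l) ((p ^ n - 1 - 2 * l) / 2) : F) *
            A ^ ((p ^ n - 1 - 2 * l) / 2) *
            B ^ (3 * l - (p ^ n - 1) / 2) *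
            C ^ ((p ^ n - 1) / 2 - 2 * l)) := by
  set q := p ^ n with hqdef
  -- basic numerics
  have hp2 : 2 ≤ p := hp.two_le
  have hpodd : p % 2 = 1 := Nat.odd_iff.mp hodd
  have hp3 : 3 ≤ p := by omega
  have hq3 : 3 ≤ q := le_trans hp3 (Nat.le_self_pow hn.ne' p)
  have hqodd : q % 2 = 1 := Nat.odd_iff.mp (hodd.pow)
  set m := (q - 1) / 2 with hmdef
  have hm1 : 1 ≤ m := by omega
  have h2m : q = 2 * m + 1 := by omega
  have hcard2 : Fintype.card F = 2 * m + 1 := by rw [hcard, ← h2m]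
  -- cast of card and char ≠ 2
  have hq0 : ((q : ℕ) : F) = 0 := by rw [← hcard]; exact FiniteField.cast_card_eq_zero F
  have hpF : (p : F) = 0 := by
    have : ((p : F)) ^ n = 0 := by
      have := hq0
      rw [hqdef] at this
      push_cast at this
      exact this
    exact pow_eq_zero_iff hn.ne' |>.mp this
  have hdvd : ringChar F ∣ p := ringChar.dvd hpF
  have hF2 : ringChar F ≠ 2 := by
    intro h
    rw [h] at hdvd
    omega
  -- square count
  have hcount : ∀ c : F, ((Finset.univ.filter fun y : F => y ^ 2 = c).card : F) = 1 + c ^ m := by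
    intro c
    rw [aux_sqcount F hF2 c]
    congr 2
    rw [hcard2]
    omega
  -- the main sum
  have hmain : ((Finset.univ.filter
        (fun xy : F × F => xy.2 ^ 2 = A * xy.1 ^ 3 + B * xy.1 + C)).card : F)
      = ∑ x : F, (A * x ^ 3 + B * x + C) ^ m := by
    rw [aux_fiber F (fun x => A * x ^ 3 + B * x + C)]
    push_cast
    simp_rw [hcount]
    rw [Finset.sum_add_distrib, Finset.sum_const, Finset.card_univ, nsmul_eq_mul, mul_one,
      FiniteField.cast_card_eq_zero, zero_add]
  have hS : ∑ x : F, (A * x ^ 3 + B * x + C) ^ m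
      = ∑ k ∈ range (m + 1), ∑ j ∈ range (k + 1),
          ((choose m k : F) * (choose k j : F) * A ^ j * B ^ (k - j) * C ^ (m - k))
            * (if k + 2 * j = 2 * m then (-1 : F) else 0) := by
    simp_rw [aux_expand F A B C _ m]
    rw [Finset.sum_comm]
    refine Finset.sum_congr rfl fun k hk => ?_
    rw [Finset.sum_comm]
    refine Finset.sum_congr rfl fun j hj => ?_
    simp only [Finset.mem_range, Nat.lt_succ_iff] at hk hj
    rw [← Finset.mul_sum, aux_powsum F m (k + 2 * j) hm1 hcard2 (by omega)]
  -- put everything together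
  rw [hq0, sub_zero, hmain, hS]
  have hstep : ∀ k ∈ range (m + 1), ∀ j ∈ range (k + 1),
      ((choose m k : F) * (choose k j : F) * A ^ j * B ^ (k - j) * C ^ (m - k))
        * (if k + 2 * j = 2 * m then (-1 : F) else 0)
      = -(if k + 2 * j = 2 * m then
          ((choose m k : F) * (choose k j : F) * A ^ j * B ^ (k - j) * C ^ (m - k)) else 0) := by
    intro k _ j _
    split_ifs <;> simp
  rw [Finset.sum_congr rfl fun k hk => Finset.sum_congr rfl fun j hj => hstep k hk j hj]
  simp_rw [Finset.sum_neg_distrib]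
  rw [neg_inj.mpr (aux_reindex F m ((q - 1 + 5) / 6) ((q - 1) / 4)
      (fun k j => (choose m k : F) * (choose k j : F) * A ^ j * B ^ (k - j) * C ^ (m - k))
      (by intro l; omega))]
  congr 1
  refine Finset.sum_congr rfl fun l hl => ?_
  simp only [Finset.mem_Icc] at hl
  have hc1 : m ≤ 3 * l := by omega
  have hc2 : 2 * l ≤ m := by omega
  have e2 : (q - 1 - 2 * l) / 2 = m - l := by omega
  have e3 : 3 * l - m = 2 * l - (m - l) := by omega
  beta_reduce
  rw [e2, e3]
end

section
/- Let q be an odd prime power, χ the quadratic character of F_q, and a,b,c,d ∈ F_q with a ≠ 0. Suppose the cubic ax³+bx²+cx+d factors as a(x-α)²(x-β) with α, β ∈ F_q and α ≠ β. Then ∑_{x∈F_q} χ(ax³+bx²+cx+d) = -χ(aα - aβ). -/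
theorem stmt_7 (F : Type*) [Field F] [Fintype F] [DecidableEq F]
    (hodd : Odd (Fintype.card F)) (a b c d α β : F) (ha : a ≠ 0) (hαβ : α ≠ β)
    (hfac : ∀ x : F, a * x ^ 3 + b * x ^ 2 + c * x + d = a * (x - α) ^ 2 * (x - β)) :
    ∑ x : F, quadraticChar F (a * x ^ 3 + b * x ^ 2 + c * x + d)
      = -(quadraticChar F (a * α - a * β)) := by
  have hF : ringChar F ≠ 2 := by
    intro h
    have h2 := FiniteField.even_card_of_char_two h
    rcases hodd with ⟨k, hk⟩
    omega
  have key : ∀ x : F, quadraticChar F (a * x ^ 3 + b * x ^ 2 + c * x + d)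
      = (if x = α then 0 else quadraticChar F a * quadraticChar F (x - β)) := by
    intro x
    rw [hfac x]
    by_cases hx : x = α
    · simp [hx, sub_self]
    · have h1 : (x - α) ≠ 0 := sub_ne_zero.mpr hx
      rw [if_neg hx, map_mul, map_mul]
      rw [quadraticChar_sq_one' h1, mul_one]
  simp_rw [key]
  have hsum0 : ∑ x : F, quadraticChar F (x - β) = 0 := by
    rw [← Equiv.sum_comp (Equiv.addRight β) (fun x => quadraticChar F (x - β))]
    simp only [Equiv.coe_addRight, add_sub_cancel_right]
    exact quadraticChar_sum_zero hF
  calc ∑ x : F, (if x = α then 0 else quadraticChar F a * quadraticChar F (x - β))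
      = ∑ x : F, (quadraticChar F a * quadraticChar F (x - β)
          - if x = α then quadraticChar F a * quadraticChar F (α - β) else 0) := by
        apply Finset.sum_congr rfl
        intro x _
        by_cases hx : x = α <;> simp [hx]
    _ = -(quadraticChar F (a * α - a * β)) := by
        rw [Finset.sum_sub_distrib, ← Finset.mul_sum, hsum0, mul_zero,
          Finset.sum_ite_eq' Finset.univ α, if_pos (Finset.mem_univ α)]
        rw [zero_sub, ← map_mul, mul_sub]
end

section
/- Let p be a prime with p ≡ 1 (mod 3) and n ≥ 1. Then the binomial coefficient C((p^n-1)/2, (p^n-1)/3) is not divisible by p. -/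
/-- If `p % d = 1` with `d ≥ 2`, then for `i ≤ n`,
    `(p ^ n - 1) / d % p ^ i = (p ^ i - 1) / d`. -/
lemma digit_aux (p d n i : ℕ) (hd : 2 ≤ d) (hpd : p % d = 1) (hp : 1 ≤ p) (hin : i ≤ n) :
    (p ^ n - 1) / d % p ^ i = (p ^ i - 1) / d := by
  have hmod : ∀ j : ℕ, d ∣ p ^ j - 1 := by
    intro j
    have h1 : p ≡ 1 [MOD d] := by
      unfold Nat.ModEq
      rw [hpd, Nat.one_mod_eq_one.mpr (by omega)]
    have h2 : p ^ j ≡ 1 [MOD d] := by simpa using h1.pow j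
    exact (Nat.modEq_iff_dvd' (Nat.one_le_pow _ _ (by omega))).mp h2.symm
  obtain ⟨a, ha⟩ := hmod i
  obtain ⟨b, hb⟩ := hmod (n - i)
  have hpi : 1 ≤ p ^ i := Nat.one_le_pow _ _ (by omega)
  have hpni : 1 ≤ p ^ (n - i) := Nat.one_le_pow _ _ (by omega)
  have hmul : p ^ i * p ^ (n - i) = p ^ n := by
    rw [← pow_add]; congr 1; omega
  have hle : p ^ i ≤ p ^ n := Nat.pow_le_pow_right (by omega) hin
  have hsplit : p ^ n - 1 = (p ^ i - 1) + p ^ i * (p ^ (n - i) - 1) := by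
    have : p ^ i * (p ^ (n - i) - 1) = p ^ n - p ^ i := by
      rw [Nat.mul_sub, hmul, mul_one]
    omega
  have hdivn : (p ^ n - 1) / d = a + p ^ i * b := by
    have : p ^ n - 1 = d * (a + p ^ i * b) := by
      rw [hsplit, ha, hb]; ring
    rw [this, Nat.mul_div_cancel_left _ (by omega)]
  have hadiv : a = (p ^ i - 1) / d := by rw [ha, Nat.mul_div_cancel_left _ (by omega)]
  have halt : a < p ^ i := by
    have : a ≤ d * a := Nat.le_mul_of_pos_left a (by omega)
    omega
  rw [hdivn, Nat.add_mul_mod_self_left, Nat.mod_eq_of_lt halt, hadiv]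

theorem stmt_15 (p n : ℕ) (hp : p.Prime) (h3 : p % 3 = 1) (hn : 1 ≤ n) :
    ¬ p ∣ Nat.choose ((p ^ n - 1) / 2) ((p ^ n - 1) / 3) := by
  have hodd : p % 2 = 1 := by
    rcases hp.eq_two_or_odd with h | h
    · omega
    · exact h
  have hp1 : 1 ≤ p := hp.one_le
  have hp6 : p % 6 = 1 := by omega
  set M := p ^ n - 1 with hM
  set m := M / 2 with hm
  set k := M / 3 with hk
  have h6M : 6 ∣ M := by
    have h1 : p ≡ 1 [MOD 6] := by unfold Nat.ModEq; omega
    have h2 : p ^ n ≡ 1 [MOD 6] := by simpa using h1.pow n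
    exact (Nat.modEq_iff_dvd' (Nat.one_le_pow _ _ (by omega))).mp h2.symm
  obtain ⟨t, ht⟩ := h6M
  have hmt : m = 3 * t := by rw [hm, ht]; omega
  have hkt : k = 2 * t := by rw [hk, ht]; omega
  have hkm : k ≤ m := by omega
  have hsub : m - k = M / 6 := by rw [ht]; omega
  have hpn1 : 1 ≤ p ^ n := Nat.one_le_pow _ _ (by omega)
  have hlog : Nat.log p m < n + 1 := by
    rcases Nat.eq_zero_or_pos m with h0 | h0
    · rw [h0]; simp [Nat.lt_succ_iff]
    · apply Nat.log_lt_of_lt_pow (by omega)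
      calc m ≤ M := Nat.div_le_self _ _
        _ < p ^ n := by omega
        _ ≤ p ^ (n + 1) := Nat.pow_le_pow_right (by omega) (by omega)
  have hmult : emultiplicity p (Nat.choose m k) =
      (Finset.filter (fun i => p ^ i ≤ k % p ^ i + (m - k) % p ^ i) (Finset.Ico 1 (n + 1))).card :=
    Nat.Prime.emultiplicity_choose hp hkm hlog
  have hempty : (Finset.filter (fun i => p ^ i ≤ k % p ^ i + (m - k) % p ^ i)
      (Finset.Ico 1 (n + 1))) = ∅ := by
    rw [Finset.filter_eq_empty_iff]
    intro i hi
    rw [Finset.mem_Ico] at hi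
    have hin : i ≤ n := by omega
    have hk3 : k % p ^ i = (p ^ i - 1) / 3 := digit_aux p 3 n i (by omega) h3 hp1 hin
    have hk6 : (m - k) % p ^ i = (p ^ i - 1) / 6 := by
      rw [hsub, hM]; exact digit_aux p 6 n i (by omega) hp6 hp1 hin
    have h6i : 6 ∣ p ^ i - 1 := by
      have h1 : p ≡ 1 [MOD 6] := by unfold Nat.ModEq; omega
      have h2 : p ^ i ≡ 1 [MOD 6] := by simpa using h1.pow i
      exact (Nat.modEq_iff_dvd' (Nat.one_le_pow _ _ (by omega))).mp h2.symm
    obtain ⟨s, hs⟩ := h6i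
    have hpi1 : 1 ≤ p ^ i := Nat.one_le_pow _ _ (by omega)
    rw [hk3, hk6, hs]
    have : 6 * s / 3 = 2 * s := by omega
    rw [this]
    have : 6 * s / 6 = s := by omega
    rw [this]
    omega
  rw [hempty] at hmult
  simp only [Finset.card_empty, Nat.cast_zero] at hmult
  rw [← emultiplicity_eq_zero]
  exact hmult
end
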